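/- Let n ≥ 1 and let P_n = M ⊔ M̂ with the relation ≤_P described in the context, and let T := {x̂ : x ∈ M∖M₀}. The number of down-sets U of ⟨P_n; ≤_P⟩ (subsets U with x ≤_P y ∈ U implying x ∈ U) satisfying U ∩ T = ∅ equals f(n) = ¼(n⁶ + 10n⁵ + 41n⁴ + 96n³ + 148n² + 148n + 144). -/

import Mathlib

/-!
STATEMENT 14: Let n ≥ 1 and let P_n = M ⊔ M̂ with the relation ≤_P, and let
T := {x̂ : x ∈ M∖M₀}.  The number of down-sets U of ⟨P_n; ≤_P⟩ satisfying
U ∩ T = ∅ equals f(n) = ¼(n⁶ + 10n⁵ + 41n⁴ + 96n³ + 148n² + 148n + 144).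
(We state this as: 4 times the number of such down-sets equals
n⁶ + 10n⁵ + 41n⁴ + 96n³ + 148n² + 148n + 144.)
-/

namespace ExpandingBelnap
/-! ### The alter ego `M̃ₙ`

The sorts are `M₀ = {⊤⁰, f⁰, t⁰, ⊥⁰}` and `M_k = {⊤ᵏ, fᵏ, 0ᵏ, tᵏ, 1ᵏ, ⊥ᵏ}` for
`k ∈ [1, n]`.  We realise the combined carrier as the type `MElt n`, where
`MElt.m0 a` is the element `a` of the sort `M₀` and `MElt.mk i v` is the element
`v` of the sort `M_{i+1}` (for `i : Fin n`). -/

/-- The four-element sort `M₀ = {⊤⁰, f⁰, t⁰, ⊥⁰}`. -/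
inductive MZero : Type
  | top | fls | tru | bot
  deriving DecidableEq

instance : Fintype MZero :=
  ⟨{.top, .fls, .tru, .bot}, fun x => by cases x <;> simp⟩

/-- The six-element sort `M_k = {⊤ᵏ, fᵏ, 0ᵏ, tᵏ, 1ᵏ, ⊥ᵏ}`. -/
inductive MSix : Type
  | top | fls | zer | tru | one | bot
  deriving DecidableEq

instance : Fintype MSix :=
  ⟨{.top, .fls, .zer, .tru, .one, .bot}, fun x => by cases x <;> simp⟩

/-- The combined carrier `M₀ ⊔ M₁ ⊔ ⋯ ⊔ Mₙ` of the alter ego `M̃ₙ`. -/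
inductive MElt (n : ℕ) : Type
  | m0 : MZero → MElt n
  | mk : Fin n → MSix → MElt n
  deriving DecidableEq, Fintype

/-- The topology on `M̃ₙ` is discrete. -/
instance (n : ℕ) : TopologicalSpace (MElt n) := ⊥

/-- The sort of an element of `M̃ₙ`. -/
def msort {n : ℕ} : MElt n → Fin (n + 1)
  | .m0 _ => 0
  | .mk i _ => i.succ

/-- The six-to-four-element projection underlying `g_k : M_k → M₀`:
`⊤ᵏ ↦ ⊤⁰`, `⊥ᵏ ↦ ⊥⁰`, `fᵏ, 0ᵏ ↦ f⁰`, `tᵏ, 1ᵏ ↦ t⁰`. -/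
def mproj : MSix → MZero
  | .top => .top
  | .bot => .bot
  | .fls => .fls
  | .zer => .fls
  | .tru => .tru
  | .one => .tru

/-- The combined operation of `M̃ₙ`: it is `g_k` on the sort `M_k` (`k ∈ [1, n]`)
and the identity on the sort `M₀`. -/
def mg {n : ℕ} : MElt n → MElt n
  | .m0 a => .m0 a
  | .mk _ v => .m0 (mproj v)

/-- The relation `≤⁰ = (M₀ × {⊤⁰}) ∪ ({⊥⁰} × M₀) ∪ {(f⁰,f⁰), (t⁰,t⁰)}` on `M₀`. -/
def mr0 : MZero → MZero → Prop := fun a b => b = .top ∨ a = .bot ∨ a = b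

/-- The pattern common to the relations `≤ᵏ` and `≤ʲᵏ` on the six-element sorts:
`{(⊤,⊤), (⊥,⊥), (f,f), (f,0), (0,0), (t,t), (t,1), (1,1)}`. -/
def mr6 : MSix → MSix → Prop :=
  fun v w => v = w ∨ (v = .fls ∧ w = .zer) ∨ (v = .tru ∧ w = .one)

/-- The combined relation of `M̃ₙ`: it is `≤⁰` within the sort `M₀`, `≤ᵏ` within a
sort `M_k` with `k ∈ [1, n]`, the relation `≤ʲᵏ` from `M_j` to `M_k` when
`1 ≤ j < k ≤ n`, and empty between all other pairs of sorts. -/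
def mr {n : ℕ} : MElt n → MElt n → Prop := fun x y =>
  match x, y with
  | .m0 a, .m0 b => mr0 a b
  | .mk i v, .mk j w => i ≤ j ∧ mr6 v w
  | _, _ => False

/-- `x ∈ M₀`, i.e. `x` lies in the four-element sort. -/
def inM0 {n : ℕ} (x : MElt n) : Prop := msort x = 0

/-- The underlying set of `P_n = M ⊔ M̂`: `Sum.inl x` is `x ∈ M` and `Sum.inr x`
is the corresponding element `x̂` of the disjoint copy `M̂`. -/
abbrev PN (n : ℕ) : Type := MElt n ⊕ MElt n

/-- The relation `≤_P` on `P_n = M ⊔ M̂` (here `mr` is the partial order `≤` on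
`M` and `mg` is the map `g : M → M₀`):
* for `x, y ∈ M`: `x ≤_P y` iff `x ≤ y`, or `x ∈ M∖M₀`, `y ∈ M₀` and `g x ≤ y`;
* for `x, y ∈ M`: `x̂ ≤_P ŷ` iff `y ≤ x`, or `x ∈ M₀`, `y ∈ M∖M₀` and `g y ≤ x`;
* for `x ∈ M∖M₀`, `y ∈ M₀`: `x ≤_P ŷ` iff `y ≤ g x`;
* for `x ∈ M₀`, `y ∈ M∖M₀`: `x ≤_P ŷ` iff `x ≤ g y`;
* for `x, y ∈ M∖M₀`: `x ≤_P ŷ` iff `g x ≤ g y` or `g y ≤ g x`;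
* no other pairs are related. -/
def ple (n : ℕ) : PN n → PN n → Prop := fun a b =>
  match a, b with
  | .inl x, .inl y => mr x y ∨ (¬ inM0 x ∧ inM0 y ∧ mr (mg x) y)
  | .inl x, .inr y =>
      (¬ inM0 x ∧ inM0 y ∧ mr y (mg x)) ∨
        (inM0 x ∧ ¬ inM0 y ∧ mr x (mg y)) ∨
        (¬ inM0 x ∧ ¬ inM0 y ∧ (mr (mg x) (mg y) ∨ mr (mg y) (mg x)))
  | .inr x, .inr y => mr y x ∨ (inM0 x ∧ ¬ inM0 y ∧ mr (mg y) x)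
  | .inr _, .inl _ => False

/-- `U` is a down-set of `⟨P_n; ≤_P⟩`. -/
def IsDownset (n : ℕ) (U : Set (PN n)) : Prop :=
  ∀ a b, ple n a b → b ∈ U → a ∈ U

/-- The set `T = {x̂ : x ∈ M ∖ M₀}`. -/
def Tset (n : ℕ) : Set (PN n) := {p | ∃ x : MElt n, ¬ inM0 x ∧ p = Sum.inr x}

/-! ### Auxiliary development -/

instance mr0.dec : ∀ a b, Decidable (mr0 a b) := fun a b => by unfold mr0; infer_instance
instance mr6.dec : ∀ a b, Decidable (mr6 a b) := fun a b => by unfold mr6; infer_instance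

inductive DZ : Type
  | e | b | bf | bt | bft | all
  deriving DecidableEq

instance : Fintype DZ :=
  ⟨{.e, .b, .bf, .bt, .bft, .all}, fun x => by cases x <;> simp⟩

def Amem : DZ → MZero → Bool
  | .e, _ => false
  | .b, a => a == .bot
  | .bf, a => a == .bot || a == .fls
  | .bt, a => a == .bot || a == .tru
  | .bft, a => a == .bot || a == .fls || a == .tru
  | .all, _ => true

def Bmem : DZ → MZero → Bool
  | .e, _ => false
  | .b, a => a == .top
  | .bf, a => a == .top || a == .fls
  | .bt, a => a == .top || a == .tru
  | .bft, a => a == .top || a == .fls || a == .tru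
  | .all, _ => true

def forcedA (d : DZ) (v : MSix) : Prop := ∃ a, Amem d a = true ∧ mr0 (mproj v) a
def forcedB (d : DZ) (v : MSix) : Prop := ∃ a, Bmem d a = true ∧ mr0 a (mproj v)

instance forcedA.dec : ∀ d v, Decidable (forcedA d v) := fun d v => by
  unfold forcedA; infer_instance
instance forcedB.dec : ∀ d v, Decidable (forcedB d v) := fun d v => by
  unfold forcedB; infer_instance

variable {n : ℕ}

def TCond (A B : DZ) (t : MSix → Fin (n + 1)) : Prop :=
  t .zer ≤ t .fls ∧ t .one ≤ t .tru ∧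
    ∀ v, (forcedA A v ∨ forcedB B v) → t v = Fin.last n

instance (A B : DZ) : DecidablePred (TCond (n := n) A B) := fun t => by
  unfold TCond; infer_instance

def PCond (n : ℕ) (p : DZ × DZ × (MSix → Fin (n + 1))) : Prop := TCond p.1 p.2.1 p.2.2

instance : DecidablePred (PCond n) := fun p => by unfold PCond; infer_instance

lemma ple_ll {x y : MElt n} (h : mr x y ∨ (¬ inM0 x ∧ inM0 y ∧ mr (mg x) y)) :
    ple n (.inl x) (.inl y) := h
lemma ple_rr {x y : MElt n} (h : mr y x ∨ (inM0 x ∧ ¬ inM0 y ∧ mr (mg y) x)) :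
    ple n (.inr x) (.inr y) := h
lemma ple_lr {x y : MElt n}
    (h : (¬ inM0 x ∧ inM0 y ∧ mr y (mg x)) ∨
      (inM0 x ∧ ¬ inM0 y ∧ mr x (mg y)) ∨
      (¬ inM0 x ∧ ¬ inM0 y ∧ (mr (mg x) (mg y) ∨ mr (mg y) (mg x)))) :
    ple n (.inl x) (.inr y) := h

lemma mr_m0 {a b : MZero} (h : mr0 a b) : mr (MElt.m0 a : MElt n) (MElt.m0 b) := h
lemma mr_mk {i j : Fin n} {v w : MSix} (h1 : i ≤ j) (h2 : mr6 v w) :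
    mr (MElt.mk i v) (MElt.mk j w) := ⟨h1, h2⟩
lemma mr_g1 {i : Fin n} {v : MSix} {a : MZero} (h : mr0 (mproj v) a) :
    mr (mg (MElt.mk i v)) (MElt.m0 a) := h
lemma mr_g2 {i : Fin n} {v : MSix} {a : MZero} (h : mr0 a (mproj v)) :
    mr (MElt.m0 a) (mg (MElt.mk i v)) := h

def toSet (A B : DZ) (t : MSix → Fin (n + 1)) : Set (PN n) := fun p =>
  match p with
  | .inl (.m0 a) => Amem A a = true
  | .inl (.mk i v) => (i : ℕ) < (t v : ℕ)
  | .inr (.m0 a) => Bmem B a = true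
  | .inr (.mk _ _) => False

@[simp] lemma inM0_m0 (a : MZero) : inM0 (MElt.m0 a : MElt n) := rfl
@[simp] lemma not_inM0_mk (i : Fin n) (v : MSix) : ¬ inM0 (MElt.mk i v) :=
  Fin.succ_ne_zero i

lemma Amem_down : ∀ d (a b : MZero), mr0 a b → Amem d b = true → Amem d a = true := by
  decide
lemma Bmem_up : ∀ d (a b : MZero), mr0 b a → Bmem d b = true → Bmem d a = true := by
  decide

lemma tmono {A B : DZ} {t : MSix → Fin (n + 1)} (h : TCond A B t) {v w : MSix}
    (hvw : mr6 v w) : (t w : ℕ) ≤ (t v : ℕ) := by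
  rcases hvw with rfl | ⟨rfl, rfl⟩ | ⟨rfl, rfl⟩
  · exact le_refl _
  · exact h.1
  · exact h.2.1

theorem toSet_isDownset (A B : DZ) (t : MSix → Fin (n + 1)) (h : TCond A B t) :
    IsDownset n (toSet A B t) := by
  rintro (x | x) (y | y) hxy hy
  · rcases x with a | ⟨i, v⟩ <;> rcases y with b | ⟨j, w⟩
    · rcases hxy with h1 | ⟨h1, -⟩
      · exact Amem_down A a b h1 hy
      · exact absurd (inM0_m0 a) h1
    · rcases hxy with h1 | ⟨-, h2, -⟩
      · exact h1.elim
      · exact absurd h2 (not_inM0_mk j w)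
    · rcases hxy with h1 | ⟨-, -, h3⟩
      · exact h1.elim
      · have ht : t v = Fin.last n := h.2.2 v (Or.inl ⟨b, hy, h3⟩)
        show (i : ℕ) < (t v : ℕ)
        rw [ht]; exact i.2
    · obtain ⟨hij, hvw⟩ : (i ≤ j) ∧ mr6 v w := hxy.resolve_right fun h2 => (not_inM0_mk j w) h2.2.1
      have h1 : (j : ℕ) < (t w : ℕ) := hy
      have h2 := tmono h hvw
      show (i : ℕ) < (t v : ℕ)
      have : (i : ℕ) ≤ (j : ℕ) := hij
      omega
  · rcases x with a | ⟨i, v⟩ <;> rcases y with b | ⟨j, w⟩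
    · rcases hxy with ⟨h1, -⟩ | ⟨-, h2, -⟩ | ⟨h3, -⟩
      · exact absurd (inM0_m0 a) h1
      · exact absurd (inM0_m0 b) h2
      · exact absurd (inM0_m0 a) h3
    · exact hy.elim
    · rcases hxy with ⟨-, -, h1⟩ | ⟨h2, -⟩ | ⟨-, h3, -⟩
      · have ht : t v = Fin.last n := h.2.2 v (Or.inr ⟨b, hy, h1⟩)
        show (i : ℕ) < (t v : ℕ)
        rw [ht]; exact i.2
      · exact absurd h2 (not_inM0_mk i v)
      · exact absurd (inM0_m0 b) h3
    · exact hy.elim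
  · exact hxy.elim
  · rcases x with a | ⟨i, v⟩ <;> rcases y with b | ⟨j, w⟩
    · rcases hxy with h1 | ⟨-, h2, -⟩
      · exact Bmem_up B a b h1 hy
      · exact absurd (inM0_m0 b) h2
    · exact hy.elim
    · rcases hxy with h1 | ⟨h2, -⟩
      · exact h1.elim
      · exact absurd h2 (not_inM0_mk i v)
    · exact hy.elim

theorem toSet_avoids (A B : DZ) (t : MSix → Fin (n + 1)) :
    toSet A B t ∩ Tset n = ∅ := by
  rw [Set.eq_empty_iff_forall_notMem]
  rintro p ⟨hp, x, hx, rfl⟩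
  rcases x with a | ⟨i, v⟩
  · exact hx (inM0_m0 a)
  · exact hp


lemma exists_DZ_A (s : MZero → Prop) (hcl : ∀ a b, mr0 a b → s b → s a) :
    ∃ d : DZ, ∀ a, s a ↔ Amem d a = true := by
  classical
  by_cases htop : s .top
  · have h1 : s .fls := hcl _ _ (Or.inl rfl) htop
    have h2 : s .tru := hcl _ _ (Or.inl rfl) htop
    have h3 : s .bot := hcl _ _ (Or.inr (Or.inl rfl)) htop
    exact ⟨.all, fun a => by cases a <;> simp [Amem, *]⟩
  · by_cases hf : s .fls <;> by_cases htr : s .tru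
    · have h3 : s .bot := hcl _ _ (Or.inr (Or.inl rfl)) hf
      exact ⟨.bft, fun a => by cases a <;> simp [Amem, *]⟩
    · have h3 : s .bot := hcl _ _ (Or.inr (Or.inl rfl)) hf
      exact ⟨.bf, fun a => by cases a <;> simp [Amem, *]⟩
    · have h3 : s .bot := hcl _ _ (Or.inr (Or.inl rfl)) htr
      exact ⟨.bt, fun a => by cases a <;> simp [Amem, *]⟩
    · by_cases hb : s .bot
      · exact ⟨.b, fun a => by cases a <;> simp [Amem, *]⟩
      · exact ⟨.e, fun a => by cases a <;> simp [Amem, *]⟩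

lemma exists_DZ_B (s : MZero → Prop) (hcl : ∀ a b, mr0 b a → s b → s a) :
    ∃ d : DZ, ∀ a, s a ↔ Bmem d a = true := by
  classical
  by_cases hbot : s .bot
  · have h1 : s .fls := hcl _ _ (Or.inr (Or.inl rfl)) hbot
    have h2 : s .tru := hcl _ _ (Or.inr (Or.inl rfl)) hbot
    have h3 : s .top := hcl _ _ (Or.inr (Or.inl rfl)) hbot
    exact ⟨.all, fun a => by cases a <;> simp [Bmem, *]⟩
  · by_cases hf : s .fls <;> by_cases htr : s .tru
    · have h3 : s .top := hcl _ _ (Or.inl rfl) hf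
      exact ⟨.bft, fun a => by cases a <;> simp [Bmem, *]⟩
    · have h3 : s .top := hcl _ _ (Or.inl rfl) hf
      exact ⟨.bf, fun a => by cases a <;> simp [Bmem, *]⟩
    · have h3 : s .top := hcl _ _ (Or.inl rfl) htr
      exact ⟨.bt, fun a => by cases a <;> simp [Bmem, *]⟩
    · by_cases ht : s .top
      · exact ⟨.b, fun a => by cases a <;> simp [Bmem, *]⟩
      · exact ⟨.e, fun a => by cases a <;> simp [Bmem, *]⟩

lemma mem_iff_lt_card (s : Finset (Fin n))
    (hcl : ∀ i j : Fin n, j ≤ i → i ∈ s → j ∈ s) (i : Fin n) :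
    i ∈ s ↔ (i : ℕ) < s.card := by
  constructor
  · intro hi
    have hsub : Finset.Iic i ⊆ s := fun j hj => hcl i j (Finset.mem_Iic.mp hj) hi
    have hc := Finset.card_le_card hsub
    rw [Fin.card_Iic] at hc
    omega
  · intro hlt
    by_contra hi
    have hsub : s ⊆ Finset.Iio i := by
      intro j hj
      rw [Finset.mem_Iio]
      by_contra hij
      exact hi (hcl j i (le_of_not_gt hij) hj)
    have hc := Finset.card_le_card hsub
    rw [Fin.card_Iio] at hc
    omega


@[simp] lemma mem_toSet_m0l {A B : DZ} {t : MSix → Fin (n + 1)} {a : MZero} :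
    (Sum.inl (MElt.m0 a) ∈ toSet A B t) ↔ Amem A a = true := Iff.rfl
@[simp] lemma mem_toSet_mkl {A B : DZ} {t : MSix → Fin (n + 1)} {i : Fin n} {v : MSix} :
    (Sum.inl (MElt.mk i v) ∈ toSet A B t) ↔ (i : ℕ) < (t v : ℕ) := Iff.rfl
@[simp] lemma mem_toSet_m0r {A B : DZ} {t : MSix → Fin (n + 1)} {a : MZero} :
    (Sum.inr (MElt.m0 a) ∈ toSet A B t) ↔ Bmem B a = true := Iff.rfl
@[simp] lemma mem_toSet_mkr {A B : DZ} {t : MSix → Fin (n + 1)} {i : Fin n} {v : MSix} :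
    (Sum.inr (MElt.mk i v) ∈ toSet A B t) ↔ False := Iff.rfl

theorem exists_param (U : Set (PN n)) (hU : IsDownset n U) (hT : U ∩ Tset n = ∅) :
    ∃ p : DZ × DZ × (MSix → Fin (n + 1)), PCond n p ∧ U = toSet p.1 p.2.1 p.2.2 := by
  classical
  obtain ⟨A, hA⟩ := exists_DZ_A (fun a => Sum.inl (MElt.m0 a) ∈ U)
    (fun a b hab hb => hU _ _ (ple_ll (Or.inl (mr_m0 hab))) hb)
  obtain ⟨B, hB⟩ := exists_DZ_B (fun a => Sum.inr (MElt.m0 a) ∈ U)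
    (fun a b hab hb => hU _ _ (ple_rr (Or.inl (mr_m0 hab))) hb)
  set tf : MSix → Fin (n + 1) := fun v =>
    ⟨(Finset.univ.filter fun i : Fin n => Sum.inl (MElt.mk i v) ∈ U).card,
      Nat.lt_succ_of_le (le_trans (Finset.card_filter_le _ _) (by simp))⟩ with htf
  have hcl : ∀ v (i j : Fin n), j ≤ i →
      (i ∈ Finset.univ.filter fun i : Fin n => Sum.inl (MElt.mk i v) ∈ U) →
      (j ∈ Finset.univ.filter fun i : Fin n => Sum.inl (MElt.mk i v) ∈ U) := by
    intro v i j hji hi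
    rw [Finset.mem_filter] at hi ⊢
    exact ⟨Finset.mem_univ _, hU _ _ (ple_ll (Or.inl (mr_mk hji (Or.inl rfl)))) hi.2⟩
  have hmem : ∀ (i : Fin n) (v : MSix), Sum.inl (MElt.mk i v) ∈ U ↔ (i : ℕ) < (tf v : ℕ) := by
    intro i v
    rw [show ((tf v : ℕ)) = (Finset.univ.filter fun i : Fin n =>
      Sum.inl (MElt.mk i v) ∈ U).card from rfl,
      ← mem_iff_lt_card _ (hcl v) i, Finset.mem_filter]
    simp
  have hforce : ∀ v, (forcedA A v ∨ forcedB B v) → ∀ i : Fin n, Sum.inl (MElt.mk i v) ∈ U := by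
    rintro v (⟨a, ha, hav⟩ | ⟨a, ha, hav⟩) i
    · exact hU _ _ (ple_ll (Or.inr ⟨not_inM0_mk i v, inM0_m0 a, mr_g1 hav⟩)) ((hA a).mpr ha)
    · exact hU _ _ (ple_lr (Or.inl ⟨not_inM0_mk i v, inM0_m0 a, mr_g2 hav⟩)) ((hB a).mpr ha)
  refine ⟨⟨A, B, tf⟩, ⟨?_, ?_, ?_⟩, ?_⟩
  · show (Finset.univ.filter fun i : Fin n => Sum.inl (MElt.mk i MSix.zer) ∈ U).card ≤
      (Finset.univ.filter fun i : Fin n => Sum.inl (MElt.mk i MSix.fls) ∈ U).card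
    exact Finset.card_le_card (fun i hi => by
      rw [Finset.mem_filter] at hi ⊢
      exact ⟨Finset.mem_univ _, hU _ _ (ple_ll (Or.inl (mr_mk (le_refl i) (Or.inr (Or.inl ⟨rfl, rfl⟩))))) hi.2⟩)
  · show (Finset.univ.filter fun i : Fin n => Sum.inl (MElt.mk i MSix.one) ∈ U).card ≤
      (Finset.univ.filter fun i : Fin n => Sum.inl (MElt.mk i MSix.tru) ∈ U).card
    exact Finset.card_le_card (fun i hi => by
      rw [Finset.mem_filter] at hi ⊢
      exact ⟨Finset.mem_univ _, hU _ _ (ple_ll (Or.inl (mr_mk (le_refl i) (Or.inr (Or.inr ⟨rfl, rfl⟩))))) hi.2⟩)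
  · intro v hv
    apply Fin.ext
    show (Finset.univ.filter fun i : Fin n => Sum.inl (MElt.mk i v) ∈ U).card = n
    rw [Finset.filter_true_of_mem (fun i _ => hforce v hv i), Finset.card_univ,
      Fintype.card_fin]
  · ext p
    rcases p with x | x <;> rcases x with a | ⟨i, v⟩
    · simpa using hA a
    · simpa using hmem i v
    · simpa using hB a
    · simp only [mem_toSet_mkr, iff_false]
      intro hp
      have : Sum.inr (MElt.mk i v) ∈ U ∩ Tset n :=
        ⟨hp, ⟨MElt.mk i v, not_inM0_mk i v, rfl⟩⟩
      rw [hT] at this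
      exact this

lemma Amem_inj : ∀ d d' : DZ, (∀ a, Amem d a = Amem d' a) → d = d' := by decide
lemma Bmem_inj : ∀ d d' : DZ, (∀ a, Bmem d a = Bmem d' a) → d = d' := by decide

lemma fin_eq_of_lt_iff (a b : Fin (n + 1))
    (h : ∀ i : Fin n, ((i : ℕ) < (a : ℕ) ↔ (i : ℕ) < (b : ℕ))) : a = b := by
  apply Fin.ext
  rcases lt_trichotomy (a : ℕ) (b : ℕ) with hlt | he | hlt
  · have hb := b.2
    have h2 : (a : ℕ) < (a : ℕ) := (h ⟨(a : ℕ), by omega⟩).mpr hlt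
    exact absurd h2 (lt_irrefl _)
  · exact he
  · have ha := a.2
    have h2 : (b : ℕ) < (b : ℕ) := (h ⟨(b : ℕ), by omega⟩).mp hlt
    exact absurd h2 (lt_irrefl _)

theorem toSet_inj (A B A' B' : DZ) (t t' : MSix → Fin (n + 1))
    (h : toSet A B t = toSet A' B' t') : A = A' ∧ B = B' ∧ t = t' := by
  rw [Set.ext_iff] at h
  refine ⟨Amem_inj A A' fun a => ?_, Bmem_inj B B' fun a => ?_, funext fun v => ?_⟩
  · have := h (Sum.inl (MElt.m0 a))
    simp only [mem_toSet_m0l] at this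
    exact Bool.coe_iff_coe.mp this
  · have := h (Sum.inr (MElt.m0 a))
    simp only [mem_toSet_m0r] at this
    exact Bool.coe_iff_coe.mp this
  · exact fin_eq_of_lt_iff _ _ fun i => by
      have := h (Sum.inl (MElt.mk i v))
      simpa using this

noncomputable def paramEquiv (n : ℕ) :
    {p : DZ × DZ × (MSix → Fin (n + 1)) // PCond n p} ≃
      {U : Set (PN n) // IsDownset n U ∧ U ∩ Tset n = ∅} := by
  apply Equiv.ofBijective (f := fun p =>
    ⟨toSet p.1.1 p.1.2.1 p.1.2.2,
      toSet_isDownset _ _ _ p.2, toSet_avoids _ _ _⟩)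
  constructor
  · rintro ⟨⟨A, B, t⟩, hp⟩ ⟨⟨A', B', t'⟩, hp'⟩ heq
    simp only [Subtype.mk.injEq] at heq
    obtain ⟨h1, h2, h3⟩ := toSet_inj A B A' B' t t' heq
    subst h1; subst h2; subst h3; rfl
  · rintro ⟨U, hU, hT⟩
    obtain ⟨p, hp, hEq⟩ := exists_param U hU hT
    exact ⟨⟨p, hp⟩, Subtype.ext hEq.symm⟩


/-! ### Counting -/

def cpair (n : ℕ) : ℕ := Fintype.card {p : Fin (n + 1) × Fin (n + 1) // p.2 ≤ p.1}

lemma cpair_eq (n : ℕ) : cpair n = ∑ a : Fin (n + 1), ((a : ℕ) + 1) := by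
  rw [cpair, Fintype.card_congr (Equiv.subtypeProdEquivSigmaSubtype fun a b => b ≤ a),
    Fintype.card_sigma]
  refine Finset.sum_congr rfl fun a _ => ?_
  rw [Fintype.card_subtype]
  have h : Finset.filter (fun b => b ≤ a) Finset.univ = Finset.Iic a := by
    ext b; simp
  rw [h, Fin.card_Iic]

lemma two_cpair (n : ℕ) : 2 * cpair n = (n + 1) * (n + 2) := by
  rw [cpair_eq, Fin.sum_univ_eq_sum_range (fun i => i + 1)]
  have h2 := Finset.sum_range_id_mul_two (n + 2)
  rw [Finset.sum_range_succ' (fun i => i) (n + 1)] at h2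
  simp only [add_zero, Nat.add_sub_cancel] at h2
  rw [Nat.mul_comm 2 _, h2, show n + 2 - 1 = n + 1 from rfl, Nat.mul_comm]

variable {n : ℕ}

lemma card_S (P : Prop) [Decidable P] :
    Fintype.card {x : Fin (n + 1) // P → x = Fin.last n} = if P then 1 else n + 1 := by
  split_ifs with h
  · rw [Fintype.card_congr (Equiv.subtypeEquivRight (q := fun x => x = Fin.last n)
      fun x => by simp [h])]
    exact Fintype.card_subtype_eq _
  · rw [Fintype.card_congr (Equiv.subtypeUnivEquiv fun x hp => absurd hp h)]
    exact Fintype.card_fin _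

lemma card_P (P : Prop) [Decidable P] :
    Fintype.card {p : Fin (n + 1) × Fin (n + 1) //
        p.2 ≤ p.1 ∧ (P → p.1 = Fin.last n ∧ p.2 = Fin.last n)} =
      if P then 1 else cpair n := by
  split_ifs with h
  · rw [Fintype.card_congr (Equiv.subtypeEquivRight
      (q := fun p => p = (Fin.last n, Fin.last n)) fun p => ?_)]
    · exact Fintype.card_subtype_eq _
    constructor
    · intro hp
      exact Prod.ext (hp.2 h).1 (hp.2 h).2
    · rintro rfl
      exact ⟨le_refl _, fun _ => ⟨rfl, rfl⟩⟩
  · rw [cpair]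
    exact Fintype.card_congr (Equiv.subtypeEquivRight fun p => by simp [h])

def tEquiv (F : MSix → Prop) [DecidablePred F] (hfz : F .fls ↔ F .zer)
    (hto : F .tru ↔ F .one) :
    {t : MSix → Fin (n + 1) //
        t .zer ≤ t .fls ∧ t .one ≤ t .tru ∧ ∀ v, F v → t v = Fin.last n} ≃
      {x : Fin (n + 1) // F .top → x = Fin.last n} ×
        {x : Fin (n + 1) // F .bot → x = Fin.last n} ×
        {p : Fin (n + 1) × Fin (n + 1) //
          p.2 ≤ p.1 ∧ (F .fls → p.1 = Fin.last n ∧ p.2 = Fin.last n)} ×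
        {p : Fin (n + 1) × Fin (n + 1) //
          p.2 ≤ p.1 ∧ (F .tru → p.1 = Fin.last n ∧ p.2 = Fin.last n)} where
  toFun t := ⟨⟨t.1 .top, fun h => t.2.2.2 _ h⟩, ⟨t.1 .bot, fun h => t.2.2.2 _ h⟩,
    ⟨(t.1 .fls, t.1 .zer), t.2.1, fun h => ⟨t.2.2.2 _ h, t.2.2.2 _ (hfz.mp h)⟩⟩,
    ⟨(t.1 .tru, t.1 .one), t.2.2.1, fun h => ⟨t.2.2.2 _ h, t.2.2.2 _ (hto.mp h)⟩⟩⟩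
  invFun q := ⟨fun v => match v with
      | .top => q.1.1
      | .bot => q.2.1.1
      | .fls => q.2.2.1.1.1
      | .zer => q.2.2.1.1.2
      | .tru => q.2.2.2.1.1
      | .one => q.2.2.2.1.2,
    q.2.2.1.2.1, q.2.2.2.2.1, fun v hv => by
      cases v with
      | top => exact q.1.2 hv
      | bot => exact q.2.1.2 hv
      | fls => exact (q.2.2.1.2.2 hv).1
      | zer => exact (q.2.2.1.2.2 (hfz.mpr hv)).2
      | tru => exact (q.2.2.2.2.2 hv).1
      | one => exact (q.2.2.2.2.2 (hto.mpr hv)).2⟩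
  left_inv t := Subtype.ext (funext fun v => by cases v <;> rfl)
  right_inv q := rfl

lemma forced_fz : ∀ A B : DZ,
    ((forcedA A .fls ∨ forcedB B .fls) ↔ (forcedA A .zer ∨ forcedB B .zer)) := by decide
lemma forced_to : ∀ A B : DZ,
    ((forcedA A .tru ∨ forcedB B .tru) ↔ (forcedA A .one ∨ forcedB B .one)) := by decide

lemma card_t (A B : DZ) :
    Fintype.card {t : MSix → Fin (n + 1) // TCond A B t} =
      (if forcedA A .top ∨ forcedB B .top then 1 else n + 1) *
        ((if forcedA A .bot ∨ forcedB B .bot then 1 else n + 1) *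
          ((if forcedA A .fls ∨ forcedB B .fls then 1 else cpair n) *
            (if forcedA A .tru ∨ forcedB B .tru then 1 else cpair n))) := by
  have e1 : {t : MSix → Fin (n + 1) // TCond A B t} ≃
      {x : Fin (n + 1) // (forcedA A .top ∨ forcedB B .top) → x = Fin.last n} ×
        {x : Fin (n + 1) // (forcedA A .bot ∨ forcedB B .bot) → x = Fin.last n} ×
        {p : Fin (n + 1) × Fin (n + 1) //
          p.2 ≤ p.1 ∧ ((forcedA A .fls ∨ forcedB B .fls) →
            p.1 = Fin.last n ∧ p.2 = Fin.last n)} ×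
        {p : Fin (n + 1) × Fin (n + 1) //
          p.2 ≤ p.1 ∧ ((forcedA A .tru ∨ forcedB B .tru) →
            p.1 = Fin.last n ∧ p.2 = Fin.last n)} :=
    (Equiv.subtypeEquivRight fun t => Iff.rfl).trans
      (tEquiv (fun v => forcedA A v ∨ forcedB B v) (forced_fz A B) (forced_to A B))
  rw [Fintype.card_congr e1]
  rw [Fintype.card_prod, Fintype.card_prod, Fintype.card_prod]
  rw [card_S, card_S, card_P, card_P]

def sigmaEquiv (n : ℕ) :
    {p : DZ × DZ × (MSix → Fin (n + 1)) // PCond n p} ≃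
      Σ A : DZ, Σ B : DZ, {t : MSix → Fin (n + 1) // TCond A B t} where
  toFun p := ⟨p.1.1, p.1.2.1, ⟨p.1.2.2, p.2⟩⟩
  invFun q := ⟨⟨q.1, q.2.1, q.2.2.1⟩, q.2.2.2⟩
  left_inv p := rfl
  right_inv q := rfl


lemma sumDZ (f : DZ → ℕ) :
    ∑ d : DZ, f d = f .e + (f .b + (f .bf + (f .bt + (f .bft + f .all)))) := rfl


theorem statement14 (n : ℕ) (hn : 1 ≤ n) :
    4 * Nat.card {U : Set (PN n) // IsDownset n U ∧ U ∩ Tset n = ∅} =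
      n ^ 6 + 10 * n ^ 5 + 41 * n ^ 4 + 96 * n ^ 3 + 148 * n ^ 2 + 148 * n + 144 := by
  classical
  have h1 : Nat.card {U : Set (PN n) // IsDownset n U ∧ U ∩ Tset n = ∅}
      = Fintype.card {p : DZ × DZ × (MSix → Fin (n + 1)) // PCond n p} := by
    rw [← Nat.card_eq_fintype_card]
    exact Nat.card_congr (paramEquiv n).symm
  have h2 : Fintype.card {p : DZ × DZ × (MSix → Fin (n + 1)) // PCond n p}
      = ∑ A : DZ, ∑ B : DZ,
          Fintype.card {t : MSix → Fin (n + 1) // TCond A B t} := by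
    rw [Fintype.card_congr (sigmaEquiv n), Fintype.card_sigma]
    exact Finset.sum_congr rfl fun A _ => Fintype.card_sigma
  rw [h1, h2]
  simp only [card_t, sumDZ]
  simp (config := { decide := true }) only [if_true, if_false]
  have hc := two_cpair n
  zify at hc ⊢
  linear_combination (2 * ((n : ℤ) + 2) ^ 2 * (cpair n : ℤ) +
    (2 * (4 * (n : ℤ) + 10) + ((n : ℤ) + 2) ^ 3 * ((n : ℤ) + 1))) * hc

end ExpandingBelnap
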